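/- Let y₂ ∈ ℝ^{n-m}, X₂ ∈ ℝ^{(n-m)×p}, β ∈ ℝᵖ nonzero, and η_{c₂} ≥ 0 with ‖y₂ - X₂β‖₂ > η_{c₂}·‖β‖₂. Then the minimum over c₂ with ‖c₂‖₂ ≤ η_{c₂} and d with ‖d‖₂ ≤ 1 of ‖y₂ - X₂β - c₂(dᵀβ)‖₂² equals (‖y₂ - X₂β‖₂ - η_{c₂}·‖β‖₂)². -/

import Mathlib

open RealInnerProductSpace

/-- For `y₂ ∈ ℝ^{n-m}`, `X₂ ∈ ℝ^{(n-m)×p}`, nonzero `β ∈ ℝᵖ`, and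
`η_{c₂} ≥ 0` with `‖y₂ - X₂β‖ > η_{c₂} ‖β‖`, the minimum over `c₂` with
`‖c₂‖ ≤ η_{c₂}` and `d` with `‖d‖ ≤ 1` of `‖y₂ - X₂β - (dᵀβ) c₂‖²` equals
`(‖y₂ - X₂β‖ - η_{c₂} ‖β‖)²`. -/
theorem stmt10 {q p : ℕ} (y₂ : EuclideanSpace ℝ (Fin q)) (X₂ : Matrix (Fin q) (Fin p) ℝ)
    (β : EuclideanSpace ℝ (Fin p)) (hβ : β ≠ 0) {ηc₂ : ℝ} (hηc₂ : 0 ≤ ηc₂)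
    (hres : ‖y₂ - (WithLp.equiv 2 (Fin q → ℝ)).symm
        (X₂.mulVec (WithLp.equiv 2 (Fin p → ℝ) β))‖ > ηc₂ * ‖β‖) :
    IsLeast
      {v : ℝ | ∃ c₂ : EuclideanSpace ℝ (Fin q), ∃ d : EuclideanSpace ℝ (Fin p),
        ‖c₂‖ ≤ ηc₂ ∧ ‖d‖ ≤ 1 ∧
        v = ‖y₂ - (WithLp.equiv 2 (Fin q → ℝ)).symm
              (X₂.mulVec (WithLp.equiv 2 (Fin p → ℝ) β)) - ⟪d, β⟫ • c₂‖ ^ 2}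
      ((‖y₂ - (WithLp.equiv 2 (Fin q → ℝ)).symm
          (X₂.mulVec (WithLp.equiv 2 (Fin p → ℝ) β))‖ - ηc₂ * ‖β‖) ^ 2) := by
  set r : EuclideanSpace ℝ (Fin q) := y₂ - (WithLp.equiv 2 (Fin q → ℝ)).symm
      (X₂.mulVec (WithLp.equiv 2 (Fin p → ℝ) β)) with hr
  have hRpos : 0 < ‖r‖ := lt_of_le_of_lt (mul_nonneg hηc₂ (norm_nonneg β)) hres
  have hβpos : 0 < ‖β‖ := norm_pos_iff.mpr hβ
  constructor
  · refine ⟨(ηc₂ / ‖r‖) • r, ‖β‖⁻¹ • β, ?_, ?_, ?_⟩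
    · rw [norm_smul, Real.norm_eq_abs, abs_of_nonneg (div_nonneg hηc₂ hRpos.le),
        div_mul_cancel₀ _ hRpos.ne']
    · rw [norm_smul, Real.norm_eq_abs, abs_of_nonneg (inv_nonneg.mpr hβpos.le),
        inv_mul_cancel₀ hβpos.ne']
    · have hinner : ⟪‖β‖⁻¹ • β, β⟫ = ‖β‖ := by
        rw [real_inner_smul_left, real_inner_self_eq_norm_sq]
        field_simp
      rw [hinner, smul_smul]
      have : r - (‖β‖ * (ηc₂ / ‖r‖)) • r = (1 - ‖β‖ * (ηc₂ / ‖r‖)) • r := by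
        rw [sub_smul, one_smul]
      rw [this, norm_smul, Real.norm_eq_abs]
      have h1 : ‖β‖ * (ηc₂ / ‖r‖) ≤ 1 := by
        rw [mul_div_assoc', div_le_one hRpos]
        linarith [hres]
      rw [abs_of_nonneg (by linarith)]
      field_simp
  · rintro v ⟨c₂, d, hc, hd, rfl⟩
    have h1 : |⟪d, β⟫| ≤ ‖β‖ := by
      calc |⟪d, β⟫| ≤ ‖d‖ * ‖β‖ := abs_real_inner_le_norm d β
        _ ≤ 1 * ‖β‖ := by apply mul_le_mul_of_nonneg_right hd (norm_nonneg β)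
        _ = ‖β‖ := one_mul _
    have h2 : ‖⟪d, β⟫ • c₂‖ ≤ ηc₂ * ‖β‖ := by
      rw [norm_smul, Real.norm_eq_abs]
      calc |⟪d, β⟫| * ‖c₂‖ ≤ ‖β‖ * ηc₂ :=
            mul_le_mul h1 hc (norm_nonneg _) (norm_nonneg _)
        _ = ηc₂ * ‖β‖ := mul_comm _ _
    have h3 : ‖r‖ - ηc₂ * ‖β‖ ≤ ‖r - ⟪d, β⟫ • c₂‖ := by
      have := norm_sub_norm_le r (⟪d, β⟫ • c₂)
      linarith
    exact pow_le_pow_left₀ (by linarith) h3 2
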